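/- Let S, T, U be real numbers with |S| < 1, S² + T² ≠ 0, and set Q = T² - S² - 2S²T². If 4(1-S²)T²/(S²+T²) ≥ 2, 4(ST+U)²/(1-S²+T²+2STU+U²) ≥ 2, and 4(-1+STU)²/(1-2STU+U²-S²U²+T²U²) ≥ 2 (all denominators positive), then Q = 0 and U² + 2STU = 1; i.e., S² = T²/(1+2T²) and U² + 2STU = 1. -/
import Mathlib


/-- Four-cylinder case: with `|S| < 1`, `S² + T² ≠ 0` and
`Q = T² - S² - 2S²T²`, the three distance inequalities force `Q = 0`
(equivalently `S² = T²/(1+2T²)`) and `U² + 2STU = 1`. -/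
theorem four_cylinders_rigid (S T U : ℝ) (hS : |S| < 1) (hST : S ^ 2 + T ^ 2 ≠ 0)
    (h1 : 4 * (1 - S ^ 2) * T ^ 2 / (S ^ 2 + T ^ 2) ≥ 2)
    (h2 : 4 * (S * T + U) ^ 2 /
        (1 - S ^ 2 + T ^ 2 + 2 * S * T * U + U ^ 2) ≥ 2)
    (h3 : 4 * (-1 + S * T * U) ^ 2 /
        (1 - 2 * S * T * U + U ^ 2 - S ^ 2 * U ^ 2 + T ^ 2 * U ^ 2) ≥ 2) :
    T ^ 2 - S ^ 2 - 2 * S ^ 2 * T ^ 2 = 0 ∧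
    S ^ 2 = T ^ 2 / (1 + 2 * T ^ 2) ∧
    U ^ 2 + 2 * S * T * U = 1 := by
  have hS1 : S ^ 2 < 1 := by
    have := abs_lt.mp hS
    nlinarith [this.1, this.2]
  have hD1 : (0:ℝ) < S ^ 2 + T ^ 2 :=
    lt_of_le_of_ne (by positivity) (Ne.symm hST)
  have hD2 : (0:ℝ) < 1 - S ^ 2 + T ^ 2 + 2 * S * T * U + U ^ 2 := by
    nlinarith [sq_nonneg (S * T + U), sq_nonneg T, mul_pos (sub_pos.mpr hS1) (by positivity : (0:ℝ) < 1 + T ^ 2)]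
  have hD3 : (0:ℝ) < 1 - 2 * S * T * U + U ^ 2 - S ^ 2 * U ^ 2 + T ^ 2 * U ^ 2 := by
    rcases eq_or_ne U 0 with hU | hU
    · simp [hU]
    · have hU2 : 0 < U ^ 2 := by positivity
      nlinarith [sq_nonneg (1 - S * T * U), mul_pos (mul_pos hU2 (sub_pos.mpr hS1)) (by positivity : (0:ℝ) < 1 + T ^ 2)]
  have e1 : 4 * (1 - S ^ 2) * T ^ 2 ≥ 2 * (S ^ 2 + T ^ 2) := by
    have := (le_div_iff₀ hD1).mp h1
    linarith
  have e2 : 4 * (S * T + U) ^ 2 ≥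
      2 * (1 - S ^ 2 + T ^ 2 + 2 * S * T * U + U ^ 2) := by
    have := (le_div_iff₀ hD2).mp h2
    linarith
  have e3 : 4 * (-1 + S * T * U) ^ 2 ≥
      2 * (1 - 2 * S * T * U + U ^ 2 - S ^ 2 * U ^ 2 + T ^ 2 * U ^ 2) := by
    have := (le_div_iff₀ hD3).mp h3
    linarith
  -- Q ≥ 0 from e1, Q ≤ 0 from e2 + e3
  have hQ0 : T ^ 2 - S ^ 2 - 2 * S ^ 2 * T ^ 2 ≥ 0 := by nlinarith
  have hQ : T ^ 2 - S ^ 2 - 2 * S ^ 2 * T ^ 2 = 0 := by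
    nlinarith [sq_nonneg U, mul_nonneg hQ0 (sq_nonneg U)]
  refine ⟨hQ, ?_, ?_⟩
  · have h2T : (0:ℝ) < 1 + 2 * T ^ 2 := by positivity
    field_simp
    linarith [hQ]
  · nlinarith [hQ, e2, e3]
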